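/- Let p be a prime with p > 3, let a be a natural number, and let c be an integer with p ∤ c. Consider the set F of all nonzero x ∈ ℤ_p such that x is a cube in ℚ_p (i.e., x = y³ for some y ∈ ℚ_p), ‖x‖_p = p^{−a}, and the unit part of x is congruent to c modulo p (i.e., x = p^a·u with u ∈ ℤ_p and u − c ∈ p·ℤ_p). If 3 divides a and c is a cube modulo p, then F equals the ball {x ∈ ℤ_p : ‖x − c·p^a‖_p ≤ p^{−(a+1)}}; otherwise F is empty. -/

import Mathlib

/-- The set of nonzero `p`-adic integers that are cubes in `ℚ_p`, have norm `p^{-a}`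
(i.e. `ord = a`), and whose unit part is congruent to `c` modulo `p` (i.e. angular
component equal to `c mod p`). -/
def cubeCell (p : ℕ) [Fact (Nat.Prime p)] (a : ℕ) (c : ℤ) : Set ℤ_[p] :=
  {x : ℤ_[p] | x ≠ 0 ∧ (∃ y : ℚ_[p], (x : ℚ_[p]) = y ^ 3) ∧
    ‖x‖ = (p : ℝ) ^ (-(a : ℤ)) ∧
    ∃ u : ℤ_[p], x = (p : ℤ_[p]) ^ a * u ∧ (p : ℤ_[p]) ∣ (u - (c : ℤ_[p]))}

section Aux

variable {p : ℕ} [Fact (Nat.Prime p)]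

lemma CubeCellAux.dvd_sub_iff_toZMod_eq (u v : ℤ_[p]) :
    (p : ℤ_[p]) ∣ (u - v) ↔ PadicInt.toZMod u = PadicInt.toZMod v := by
  rw [← Ideal.mem_span_singleton, ← PadicInt.maximalIdeal_eq_span_p, ← PadicInt.ker_toZMod,
    RingHom.mem_ker, map_sub, sub_eq_zero]

lemma CubeCellAux.norm_int_eq_one (c : ℤ) (hc : ¬ (p : ℤ) ∣ c) : ‖(c : ℤ_[p])‖ = 1 := by
  rcases lt_or_eq_of_le (PadicInt.norm_le_one (c : ℤ_[p])) with h | h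
  · exact absurd ((PadicInt.norm_int_lt_one_iff_dvd c).1 h) hc
  · exact h

open Polynomial in
lemma CubeCellAux.exists_cube_root (hp : 3 < p) (u : ℤ_[p]) (hu : ‖u‖ = 1) (z : ZMod p)
    (hz : PadicInt.toZMod u = z ^ 3) : ∃ w : ℤ_[p], w ^ 3 = u := by
  have hz0 : z ≠ 0 := by
    rintro rfl
    rw [zero_pow (by norm_num)] at hz
    have : (p : ℤ_[p]) ∣ u := by
      have := (CubeCellAux.dvd_sub_iff_toZMod_eq u 0).2 (by simpa using hz)
      simpa using this
    rw [← PadicInt.norm_lt_one_iff_dvd, hu] at this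
    exact lt_irrefl _ this
  set y₀ : ℤ_[p] := (z.val : ℤ_[p]) with hy₀
  have hty : PadicInt.toZMod y₀ = z := by
    rw [hy₀, map_natCast]
    exact ZMod.natCast_rightInverse z
  have hy₀norm : ‖y₀‖ = 1 := by
    rcases lt_or_eq_of_le (PadicInt.norm_le_one y₀) with h | h
    · rw [PadicInt.norm_lt_one_iff_dvd] at h
      have : PadicInt.toZMod y₀ = 0 := by
        have := (CubeCellAux.dvd_sub_iff_toZMod_eq y₀ 0).1 (by simpa using h)
        simpa using this
      exact absurd (hty ▸ this) hz0
    · exact h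
  have h3 : ‖(3 : ℤ_[p])‖ = 1 := by
    have : ((3 : ℤ) : ℤ_[p]) = (3 : ℤ_[p]) := by push_cast; ring
    rw [← this]
    refine CubeCellAux.norm_int_eq_one 3 ?_
    intro h
    have := Int.le_of_dvd (by norm_num) h
    omega
  set F : ℤ_[p][X] := X ^ 3 - C u with hF
  have hFe : ∀ t : ℤ_[p], F.eval t = t ^ 3 - u := by intro t; simp [hF]
  have hFd : F.derivative = C 3 * X ^ 2 := by
    simp [hF]
    rw [← C_1, ← C_add]; norm_num
  have hFde : F.derivative.eval y₀ = 3 * y₀ ^ 2 := by simp [hFd]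
  have hnorm : ‖F.eval y₀‖ < ‖F.derivative.eval y₀‖ ^ 2 := by
    have h1 : ‖F.derivative.eval y₀‖ = 1 := by
      rw [hFde, norm_mul, h3, norm_pow, hy₀norm]; norm_num
    have h2 : ‖F.eval y₀‖ < 1 := by
      rw [hFe, PadicInt.norm_lt_one_iff_dvd, CubeCellAux.dvd_sub_iff_toZMod_eq,
        map_pow, hty, hz]
    rw [h1]; simpa using h2
  obtain ⟨w, hw, -⟩ := hensels_lemma hnorm
  refine ⟨w, ?_⟩
  rw [coe_aeval_eq_eval, hFe w, sub_eq_zero] at hw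
  exact hw

lemma CubeCellAux.ball_facts (a : ℕ) (c : ℤ) (hc : ¬ (p : ℤ) ∣ c) (x : ℤ_[p])
    (hx : ‖x - (c : ℤ_[p]) * (p : ℤ_[p]) ^ a‖ ≤ (p : ℝ) ^ (-((a : ℤ) + 1))) :
    x ≠ 0 ∧ ‖x‖ = (p : ℝ) ^ (-(a : ℤ)) ∧
      ∃ u : ℤ_[p], x = (p : ℤ_[p]) ^ a * u ∧ (p : ℤ_[p]) ∣ (u - (c : ℤ_[p])) ∧ ‖u‖ = 1 := by
  have hp1 : (1 : ℝ) < p := by exact_mod_cast (Fact.out : p.Prime).one_lt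
  have hp0 : (0 : ℝ) < p := lt_trans one_pos hp1
  have hcn : ‖(c : ℤ_[p])‖ = 1 := CubeCellAux.norm_int_eq_one c hc
  have hcp : ‖(c : ℤ_[p]) * (p : ℤ_[p]) ^ a‖ = (p : ℝ) ^ (-(a : ℤ)) := by
    rw [norm_mul, hcn, PadicInt.norm_p_pow, one_mul]
  have hlt : (p : ℝ) ^ (-((a : ℤ) + 1)) < (p : ℝ) ^ (-(a : ℤ)) :=
    (zpow_lt_zpow_iff_right₀ hp1).2 (by omega)
  have hne : ‖x - (c : ℤ_[p]) * (p : ℤ_[p]) ^ a‖ ≠ ‖(c : ℤ_[p]) * (p : ℤ_[p]) ^ a‖ := by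
    rw [hcp]; exact ne_of_lt (lt_of_le_of_lt hx hlt)
  have hxnorm : ‖x‖ = (p : ℝ) ^ (-(a : ℤ)) := by
    have := PadicInt.norm_add_eq_max_of_ne hne
    rw [sub_add_cancel] at this
    rw [this, hcp, max_eq_right (le_of_lt (lt_of_le_of_lt hx hlt))]
  have hx0 : x ≠ 0 := by
    intro h
    rw [h, norm_zero] at hxnorm
    exact (zpow_pos hp0 _).ne' hxnorm.symm
  obtain ⟨u, hxu⟩ : (p : ℤ_[p]) ^ a ∣ x := by
    rw [← Ideal.mem_span_singleton, ← PadicInt.norm_le_pow_iff_mem_span_pow]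
    exact le_of_eq hxnorm
  have hu1 : ‖u‖ = 1 := by
    have h : ‖x‖ = (p : ℝ) ^ (-(a : ℤ)) * ‖u‖ := by
      rw [hxu, norm_mul, PadicInt.norm_p_pow]
    rw [hxnorm] at h
    have h2 := mul_left_cancel₀ (zpow_pos hp0 (-(a : ℤ))).ne'
      ((mul_one ((p : ℝ) ^ (-(a : ℤ)))).trans h)
    exact h2.symm
  refine ⟨hx0, hxnorm, u, hxu, ?_, hu1⟩
  have key : x - (c : ℤ_[p]) * (p : ℤ_[p]) ^ a = (p : ℤ_[p]) ^ a * (u - (c : ℤ_[p])) := by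
    rw [hxu]; ring
  have hdvd : (p : ℤ_[p]) ^ (a + 1) ∣ (p : ℤ_[p]) ^ a * (u - (c : ℤ_[p])) := by
    rw [← Ideal.mem_span_singleton, ← PadicInt.norm_le_pow_iff_mem_span_pow, ← key]
    have hcast : (-(((a + 1) : ℕ) : ℤ)) = (-((a : ℤ) + 1)) := by push_cast; ring
    rw [hcast]
    exact hx
  have hpne : (p : ℤ_[p]) ^ a ≠ 0 := pow_ne_zero _ (by
    exact_mod_cast Nat.cast_ne_zero.2 (Fact.out : p.Prime).ne_zero)
  rw [pow_succ] at hdvd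
  obtain ⟨t, ht⟩ := hdvd
  refine ⟨t, mul_left_cancel₀ hpne ?_⟩
  rw [ht]; ring

lemma CubeCellAux.mem_imp (a : ℕ) (c : ℤ) (x : ℤ_[p])
    (hx0 : x ≠ 0) (hy : ∃ y : ℚ_[p], (x : ℚ_[p]) = y ^ 3)
    (hnorm : ‖x‖ = (p : ℝ) ^ (-(a : ℤ)))
    (hu : ∃ u : ℤ_[p], x = (p : ℤ_[p]) ^ a * u ∧ (p : ℤ_[p]) ∣ (u - (c : ℤ_[p]))) :
    3 ∣ a ∧ ∃ z : ZMod p, z ^ 3 = (c : ZMod p) := by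
  have hp1 : (1 : ℝ) < p := by exact_mod_cast (Fact.out : p.Prime).one_lt
  have hp0 : (0 : ℝ) < p := lt_trans one_pos hp1
  obtain ⟨y, hy⟩ := hy
  obtain ⟨u, hxu, hdvd⟩ := hu
  have hy0 : y ≠ 0 := by
    rintro rfl
    rw [zero_pow (by norm_num)] at hy
    exact hx0 (Subtype.ext hy)
  have hyx : ‖y‖ ^ 3 = (p : ℝ) ^ (-(a : ℤ)) := by
    rw [← _root_.norm_pow, ← hy, PadicInt.padic_norm_e_of_padicInt, hnorm]
  set v : ℤ := y.valuation with hv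
  have hyval : ‖y‖ = (p : ℝ) ^ (-v) := Padic.norm_eq_zpow_neg_valuation hy0
  have hval3 : (p : ℝ) ^ ((-v) * 3) = (p : ℝ) ^ (-(a : ℤ)) := by
    rw [zpow_mul]
    rw [hyval] at hyx
    exact_mod_cast hyx
  have hval : (-v) * 3 = -(a : ℤ) :=
    zpow_right_injective₀ hp0 (ne_of_gt hp1) hval3
  have h3a : 3 ∣ a := by
    have : (3 : ℤ) ∣ (a : ℤ) := ⟨v, by omega⟩
    exact_mod_cast this
  obtain ⟨b, hb⟩ := h3a
  have hvb : v = (b : ℤ) := by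
    have : (a : ℤ) = 3 * b := by exact_mod_cast hb
    omega
  have hy1 : ‖y‖ ≤ 1 := by
    rw [hyval]
    calc (p : ℝ) ^ (-v) ≤ (p : ℝ) ^ (0 : ℤ) :=
          (zpow_le_zpow_iff_right₀ hp1).2 (by omega)
      _ = 1 := zpow_zero _
  set Y : ℤ_[p] := ⟨y, hy1⟩ with hY
  have hYcoe : (Y : ℚ_[p]) = y := rfl
  have hxY : x = Y ^ 3 := by
    apply Subtype.ext
    push_cast
    exact hy
  have hYnorm : ‖Y‖ = (p : ℝ) ^ (-(b : ℤ)) := by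
    rw [PadicInt.norm_def, hYcoe, hyval, hvb]
  obtain ⟨w, hw⟩ : (p : ℤ_[p]) ^ b ∣ Y := by
    rw [← Ideal.mem_span_singleton, ← PadicInt.norm_le_pow_iff_mem_span_pow]
    exact le_of_eq hYnorm
  have hpne : (p : ℤ_[p]) ^ a ≠ 0 :=
    pow_ne_zero _ (by exact_mod_cast Nat.cast_ne_zero.2 (Fact.out : p.Prime).ne_zero)
  have huw : u = w ^ 3 := by
    apply mul_left_cancel₀ hpne
    rw [← hxu, hxY, hw, mul_pow, ← pow_mul, Nat.mul_comm b 3, ← hb]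
  refine ⟨⟨b, hb⟩, PadicInt.toZMod w, ?_⟩
  have := (CubeCellAux.dvd_sub_iff_toZMod_eq u (c : ℤ_[p])).1 hdvd
  rw [← map_pow, ← huw, this, map_intCast]

end Aux

/-- Example (1) of the paper: for `p > 3`, `p ∤ c`, the piece of the set of `p`-adic
integer cubes with `ord = a` and angular component `c mod p` is the ball
`{x ∈ ℤ_p : ‖x − c·p^a‖ ≤ p^{−(a+1)}}` if `3 ∣ a` and `c` is a cube modulo `p`,
and is empty otherwise. -/
theorem cubeCell_eq_ball_or_empty
    (p : ℕ) [Fact (Nat.Prime p)] (hp : 3 < p) (a : ℕ) (c : ℤ) (hc : ¬ (p : ℤ) ∣ c) :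
    ((3 ∣ a ∧ ∃ z : ZMod p, z ^ 3 = (c : ZMod p)) →
      cubeCell p a c =
        {x : ℤ_[p] | ‖x - (c : ℤ_[p]) * (p : ℤ_[p]) ^ a‖ ≤ (p : ℝ) ^ (-((a : ℤ) + 1))}) ∧
    (¬ (3 ∣ a ∧ ∃ z : ZMod p, z ^ 3 = (c : ZMod p)) → cubeCell p a c = ∅) := by
  constructor
  · rintro ⟨h3a, z, hz⟩
    ext x
    simp only [cubeCell, Set.mem_setOf_eq]
    constructor
    · rintro ⟨hx0, -, hnorm, u, hxu, t, ht⟩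
      have key : x - (c : ℤ_[p]) * (p : ℤ_[p]) ^ a = (p : ℤ_[p]) ^ (a + 1) * t := by
        have : u - (c : ℤ_[p]) = (p : ℤ_[p]) * t := ht
        rw [hxu, pow_succ]
        calc (p : ℤ_[p]) ^ a * u - (c : ℤ_[p]) * (p : ℤ_[p]) ^ a
            = (p : ℤ_[p]) ^ a * (u - (c : ℤ_[p])) := by ring
          _ = (p : ℤ_[p]) ^ a * (p : ℤ_[p]) * t := by rw [this]; ring
      rw [key]
      calc ‖(p : ℤ_[p]) ^ (a + 1) * t‖ = ‖(p : ℤ_[p]) ^ (a + 1)‖ * ‖t‖ :=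
            norm_mul _ _
        _ ≤ ‖(p : ℤ_[p]) ^ (a + 1)‖ * 1 := by
            exact mul_le_mul_of_nonneg_left (PadicInt.norm_le_one t) (norm_nonneg _)
        _ = (p : ℝ) ^ (-((a : ℤ) + 1)) := by
            rw [mul_one, PadicInt.norm_p_pow]
            norm_num
    · intro hx
      obtain ⟨hx0, hnorm, u, hxu, hdvd, hu1⟩ := CubeCellAux.ball_facts a c hc x hx
      refine ⟨hx0, ?_, hnorm, u, hxu, hdvd⟩
      have htu : PadicInt.toZMod u = z ^ 3 := by
        have := (CubeCellAux.dvd_sub_iff_toZMod_eq u (c : ℤ_[p])).1 hdvd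
        rw [this, map_intCast, hz]
      obtain ⟨w, hw⟩ := CubeCellAux.exists_cube_root hp u hu1 z htu
      refine ⟨(p : ℚ_[p]) ^ (a / 3) * (w : ℚ_[p]), ?_⟩
      rw [mul_pow, ← pow_mul, Nat.mul_comm (a / 3) 3, Nat.mul_div_cancel' h3a, hxu, ← hw]
      push_cast
      ring
  · intro h
    ext x
    simp only [cubeCell, Set.mem_setOf_eq, Set.mem_empty_iff_false, iff_false]
    rintro ⟨hx0, hy, hnorm, hu⟩
    exact h (CubeCellAux.mem_imp a c x hx0 hy hnorm hu)
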